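/- Let F be a field of characteristic zero, K = F(t), δ the derivation with δ|_F = 0 and δ(t) = t, and P ∈ Mₙ(F) traceless. Then (Mₙ(K), D_P) is split over (K, δ) itself—i.e., δ^c(Y) = Pᵀ·Y has a solution in GLₙ(K)—if and only if P is diagonalizable over F̄ and all eigenvalues of P are integers. -/

import Mathlib

open Matrix Polynomial
open scoped RatFunc

set_option maxHeartbeats 1000000
set_option synthInstance.maxHeartbeats 400000

namespace Stmt17

noncomputable section

variable {F : Type*} [Field F]

/-- The Euler operator `t d/dt` on Laurent series: multiplies the `k`-th coefficient by `k`. -/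
def euler (f : LaurentSeries F) : LaurentSeries F where
  coeff k := (k : F) * f.coeff k
  isPWO_support' := f.isPWO_support.mono
    (Function.support_mul_subset_right (fun k : ℤ => (k : F)) f.coeff)

@[simp] lemma euler_coeff (f : LaurentSeries F) (k : ℤ) :
    (euler f).coeff k = (k : F) * f.coeff k := rfl

lemma euler_support (f : LaurentSeries F) : (euler f).support ⊆ f.support :=
  Function.support_mul_subset_right (fun k : ℤ => (k : F)) f.coeff

lemma euler_add (f g : LaurentSeries F) : euler (f + g) = euler f + euler g := by
  ext k
  simp [euler_coeff, mul_add]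

/-- `euler` as an additive monoid hom. -/
def eulerHom : LaurentSeries F →+ LaurentSeries F := AddMonoidHom.mk' euler euler_add

@[simp] lemma eulerHom_apply (f : LaurentSeries F) : (eulerHom f : LaurentSeries F) = euler f := rfl

lemma euler_single (m : ℤ) (a : F) :
    euler (HahnSeries.single m a) = HahnSeries.single m ((m : F) * a) := by
  ext k
  rw [euler_coeff, HahnSeries.coeff_single, HahnSeries.coeff_single]
  by_cases h : k = m
  · subst h; simp
  · simp [h]

lemma euler_mul (f g : LaurentSeries F) :
    euler (f * g) = euler f * g + f * euler g := by
  ext k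
  rw [HahnSeries.coeff_add, euler_coeff, HahnSeries.coeff_mul,
    HahnSeries.coeff_mul_left' f.isPWO_support (euler_support f),
    HahnSeries.coeff_mul_right' g.isPWO_support (euler_support g),
    Finset.mul_sum, ← Finset.sum_add_distrib]
  refine Finset.sum_congr rfl fun ij hij => ?_
  obtain ⟨-, -, hsum⟩ := Finset.mem_addAntidiagonal.mp hij
  rw [euler_coeff, euler_coeff, ← hsum]
  push_cast
  ring

/-- The `k`-th coefficient as an additive monoid hom. -/
def coeffHom (k : ℤ) : LaurentSeries F →+ F :=
  AddMonoidHom.mk' (fun f => f.coeff k) (fun f g => HahnSeries.coeff_add)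

lemma ratFunc_coe_C (a : F) :
    ((RatFunc.C a : RatFunc F) : LaurentSeries F) = HahnSeries.C a := by
  rw [← RatFunc.algebraMap_C, ← IsScalarTower.algebraMap_apply]
  simp

@[simp] lemma coeffHom_apply (k : ℤ) (f : LaurentSeries F) : coeffHom k f = f.coeff k := rfl

section delta

variable (δ : RatFunc F → RatFunc F)
variable (hadd : ∀ x y : RatFunc F, δ (x + y) = δ x + δ y)
variable (hmul : ∀ x y : RatFunc F, δ (x * y) = δ x * y + x * δ y)
variable (hF : ∀ a : F, δ (algebraMap F (RatFunc F) a) = 0)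
variable (ht : δ RatFunc.X = RatFunc.X)

include hadd hmul hF ht

lemma coe_delta_poly (p : Polynomial F) :
    ((δ (algebraMap (Polynomial F) (RatFunc F) p) : RatFunc F) : LaurentSeries F)
      = euler ((algebraMap (Polynomial F) (RatFunc F) p : RatFunc F) : LaurentSeries F) := by
  induction p using Polynomial.induction_on with
  | C a =>
      rw [RatFunc.algebraMap_C, ← RatFunc.algebraMap_eq_C, hF a, _root_.map_zero,
        RatFunc.algebraMap_eq_C, ratFunc_coe_C]
      rw [show (HahnSeries.C a : LaurentSeries F) = HahnSeries.single 0 a from rfl, euler_single]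
      simp
  | add p q hp hq =>
      rw [map_add, hadd, _root_.map_add, _root_.map_add, euler_add, hp, hq]
  | monomial m a ih =>
      have hsplit : (Polynomial.C a * Polynomial.X ^ (m + 1)) =
          (Polynomial.C a * Polynomial.X ^ m) * Polynomial.X := by ring
      rw [hsplit, _root_.map_mul, hmul, RatFunc.algebraMap_X, ht, _root_.map_add,
        map_mul (algebraMap (RatFunc F) (LaurentSeries F)),
        map_mul (algebraMap (RatFunc F) (LaurentSeries F)), ih, euler_mul]
      congr 1
      rw [RatFunc.coe_X]
      rw [show euler (HahnSeries.single 1 (1 : F)) = HahnSeries.single 1 ((1:ℤ) * (1:F)) from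
        euler_single 1 1]
      norm_num

lemma coe_delta (f : RatFunc F) :
    ((δ f : RatFunc F) : LaurentSeries F) = euler (f : LaurentSeries F) := by
  have hden : (algebraMap (Polynomial F) (RatFunc F) f.denom) ≠ 0 := by
    simpa using (RatFunc.denom_ne_zero f)
  have hfq : algebraMap (Polynomial F) (RatFunc F) f.denom * f
      = algebraMap (Polynomial F) (RatFunc F) f.num := by
    have h0 := RatFunc.num_div_denom f
    calc algebraMap (Polynomial F) (RatFunc F) f.denom * f
        = f * algebraMap (Polynomial F) (RatFunc F) f.denom := mul_comm _ _
      _ = (algebraMap (Polynomial F) (RatFunc F) f.num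
            / algebraMap (Polynomial F) (RatFunc F) f.denom)
            * algebraMap (Polynomial F) (RatFunc F) f.denom := by rw [h0]
      _ = algebraMap (Polynomial F) (RatFunc F) f.num := div_mul_cancel₀ _ hden
  have hA : δ (algebraMap (Polynomial F) (RatFunc F) f.denom) * f
      + algebraMap (Polynomial F) (RatFunc F) f.denom * δ f
      = δ (algebraMap (Polynomial F) (RatFunc F) f.num) := by
    rw [← hmul, hfq]
  have hcoeA := congrArg (fun z : RatFunc F => (z : LaurentSeries F)) hA
  simp only [_root_.map_add, _root_.map_mul] at hcoeA
  rw [coe_delta_poly δ hadd hmul hF ht, coe_delta_poly δ hadd hmul hF ht] at hcoeA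
  have hB : euler (((algebraMap (Polynomial F) (RatFunc F) f.denom : RatFunc F) : LaurentSeries F)
        * (f : LaurentSeries F))
      = euler ((algebraMap (Polynomial F) (RatFunc F) f.num : RatFunc F) : LaurentSeries F) := by
    rw [← _root_.map_mul, hfq]
  rw [euler_mul] at hB
  have hkey : ((algebraMap (Polynomial F) (RatFunc F) f.denom : RatFunc F) : LaurentSeries F)
      * (((δ f : RatFunc F) : LaurentSeries F) - euler (f : LaurentSeries F)) = 0 := by
    rw [mul_sub]
    rw [← hB] at hcoeA
    linear_combination hcoeA
  have hcne : ((algebraMap (Polynomial F) (RatFunc F) f.denom : RatFunc F) : LaurentSeries F) ≠ 0 := by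
    intro h
    apply hden
    apply (algebraMap (RatFunc F) (LaurentSeries F)).injective
    rw [h, _root_.map_zero]
  have := mul_eq_zero.mp hkey
  rcases this with h | h
  · exact absurd h hcne
  · exact sub_eq_zero.mp h

end delta

variable {n : ℕ}


lemma prod_X_sub_C_dvd {ι : Type*} [DecidableEq ι] (s : Finset ι) (v : ι → F)
    (hv : Set.InjOn v s) (p : Polynomial F) (h : ∀ m ∈ s, p.eval (v m) = 0) :
    (∏ m ∈ s, (X - C (v m))) ∣ p := by
  refine Finset.prod_dvd_of_coprime ?_ fun i hi => (dvd_iff_isRoot).mpr (h i hi)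
  intro i hi j hj hij
  exact isCoprime_X_sub_C_of_isUnit_sub
    (IsUnit.mk0 _ (sub_ne_zero.mpr fun h' => hij (hv hi hj h')))

lemma aeval_transpose (M : Matrix (Fin n) (Fin n) F) (p : Polynomial F) :
    aeval Mᵀ p = (aeval M p)ᵀ := by
  induction p using Polynomial.induction_on' with
  | add p q hp hq => rw [map_add, map_add, hp, hq, Matrix.transpose_add]
  | monomial k a =>
      rw [aeval_monomial, aeval_monomial, ← Algebra.smul_def, ← Algebra.smul_def,
        ← Matrix.transpose_pow, ← Matrix.transpose_smul]

lemma eval_charpoly (A : Matrix (Fin n) (Fin n) F) (b : F) :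
    (A.charpoly).eval b = (b • (1 : Matrix (Fin n) (Fin n) F) - A).det := by
  rw [Matrix.charpoly, ← Polynomial.coe_evalRingHom, RingHom.map_det]
  congr 1
  ext i j
  by_cases h : i = j
  · subst h
    simp [Matrix.charmatrix_apply_eq, Matrix.map_apply, Matrix.smul_apply, Matrix.one_apply,
      smul_eq_mul]
  · simp [Matrix.charmatrix_apply_ne _ _ _ h, Matrix.map_apply, Matrix.smul_apply,
      Matrix.one_apply, h, smul_eq_mul]

/-- The Lagrange idempotent system attached to an annihilating split squarefree polynomial. -/
lemma lagrange_system (A : Matrix (Fin n) (Fin n) F) (s : Finset ℤ) (hsne : s.Nonempty)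
    [CharZero F]
    (hq : aeval A (∏ m ∈ s, (X - C ((m : ℤ) : F))) = 0) :
    ∃ E : ℤ → Matrix (Fin n) (Fin n) F,
      (∑ m ∈ s, E m = 1) ∧ (∀ m ∈ s, A * E m = ((m : ℤ) : F) • E m) ∧
      (∀ m ∈ s, ∀ m' ∈ s, m ≠ m' → E m * E m' = 0) ∧ (∀ m ∈ s, E m * E m = E m) := by
  set v : ℤ → F := fun m => ((m : ℤ) : F) with hv_def
  have hv : Set.InjOn v s := fun a _ b _ h => Int.cast_injective h
  set q : Polynomial F := ∏ m ∈ s, (X - C (v m)) with hq_def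
  set E : ℤ → Matrix (Fin n) (Fin n) F := fun m => aeval A (Lagrange.basis s v m) with hE_def
  have hdvd : ∀ p : Polynomial F, (∀ m ∈ s, p.eval (v m) = 0) → aeval A p = 0 := by
    intro p hp
    obtain ⟨h, hh⟩ := prod_X_sub_C_dvd s v hv p hp
    rw [hh, _root_.map_mul, hq, zero_mul]
  refine ⟨E, ?_, ?_, ?_, ?_⟩
  · rw [hE_def, ← map_sum, Lagrange.sum_basis hv hsne, _root_.map_one]
  · intro m hm
    have h1 : aeval A ((X - C (v m)) * Lagrange.basis s v m) = 0 := by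
      apply hdvd
      intro m' hm'
      rw [eval_mul, eval_sub, eval_X, eval_C]
      by_cases h : m' = m
      · subst h; rw [sub_self, zero_mul]
      · rw [Lagrange.eval_basis_of_ne (fun hc => h hc.symm) hm', mul_zero]
    rw [_root_.map_mul, map_sub, aeval_X, aeval_C, Algebra.algebraMap_eq_smul_one,
      sub_mul, Matrix.smul_mul, Matrix.one_mul, sub_eq_zero] at h1
    exact h1
  · intro m hm m' hm' hne
    rw [hE_def, ← _root_.map_mul]
    apply hdvd
    intro m'' hm''
    rw [eval_mul]
    by_cases h : m'' = m
    · subst h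
      rw [Lagrange.eval_basis_of_ne (Ne.symm hne) hm'', mul_zero]
    · rw [Lagrange.eval_basis_of_ne (fun hc => h hc.symm) hm'', zero_mul]
  · intro m hm
    have h2 : aeval A (Lagrange.basis s v m * Lagrange.basis s v m - Lagrange.basis s v m)
        = 0 := by
      apply hdvd
      intro m' hm'
      rw [eval_sub, eval_mul]
      by_cases h : m' = m
      · subst h; rw [Lagrange.eval_basis_self hv hm']; ring
      · rw [Lagrange.eval_basis_of_ne (fun hc => h hc.symm) hm']; ring
    rw [map_sub, _root_.map_mul, sub_eq_zero] at h2
    exact h2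

section construct

variable [CharZero F]
variable (δ : RatFunc F → RatFunc F)
variable (hadd : ∀ x y : RatFunc F, δ (x + y) = δ x + δ y)
variable (hmul : ∀ x y : RatFunc F, δ (x * y) = δ x * y + x * δ y)
variable (hF : ∀ a : F, δ (algebraMap F (RatFunc F) a) = 0)
variable (ht : δ RatFunc.X = RatFunc.X)

lemma coe_sum {α : Type*} (t : Finset α) (g : α → RatFunc F) :
    ((∑ a ∈ t, g a : RatFunc F) : LaurentSeries F)
      = ∑ a ∈ t, ((g a : RatFunc F) : LaurentSeries F) :=
  map_sum (algebraMap (RatFunc F) (LaurentSeries F)) g t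

lemma coe_X_zpow (m : ℤ) :
    (((RatFunc.X : RatFunc F) ^ m : RatFunc F) : LaurentSeries F)
      = HahnSeries.single m (1 : F) := by
  rw [show (((RatFunc.X : RatFunc F) ^ m : RatFunc F) : LaurentSeries F)
      = algebraMap (RatFunc F) (LaurentSeries F) (RatFunc.X ^ m) from rfl, map_zpow₀,
    RatFunc.coe_X, ← RatFunc.single_zpow]

lemma single_sum {α : Type*} (t : Finset α) (g : α → F) (m : ℤ) :
    (∑ a ∈ t, HahnSeries.single m (g a) : LaurentSeries F)
      = HahnSeries.single m (∑ a ∈ t, g a) :=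
  (map_sum (HahnSeries.single.addMonoidHom m) g t).symm

lemma coe_algebraMap' (a : F) :
    ((algebraMap F (RatFunc F) a : RatFunc F) : LaurentSeries F)
      = HahnSeries.single (0 : ℤ) a := by
  rw [RatFunc.algebraMap_eq_C, ratFunc_coe_C, HahnSeries.C_apply]

include hadd hmul hF ht in
lemma construct (P : Matrix (Fin n) (Fin n) F) (s : Finset ℤ) (hsne : s.Nonempty)
    (hq : aeval P (∏ m ∈ s, (X - C ((m : ℤ) : F))) = 0) :
    ∃ Y : Matrix (Fin n) (Fin n) (RatFunc F), IsUnit Y.det ∧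
      Y.map δ = (P.map (algebraMap F (RatFunc F)))ᵀ * Y := by
  have hqT : aeval Pᵀ (∏ m ∈ s, (X - C ((m : ℤ) : F))) = 0 := by
    rw [aeval_transpose, hq, Matrix.transpose_zero]
  obtain ⟨E, hsum, heig, horth, hidem⟩ := lagrange_system Pᵀ s hsne hqT
  set ψ : Matrix (Fin n) (Fin n) F →+* Matrix (Fin n) (Fin n) (RatFunc F) :=
    (algebraMap F (RatFunc F)).mapMatrix with hψ
  set Y : Matrix (Fin n) (Fin n) (RatFunc F) :=
    ∑ m ∈ s, ((RatFunc.X : RatFunc F) ^ (m : ℤ)) • ψ (E m) with hY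
  set Y' : Matrix (Fin n) (Fin n) (RatFunc F) :=
    ∑ m ∈ s, ((RatFunc.X : RatFunc F) ^ (-(m : ℤ))) • ψ (E m) with hY'
  have hXne : (RatFunc.X : RatFunc F) ≠ 0 := RatFunc.X_ne_zero
  have hYY' : Y * Y' = 1 := by
    rw [hY, hY', Finset.sum_mul_sum]
    have hterm : ∀ m ∈ s, (∑ m' ∈ s,
        ((RatFunc.X : RatFunc F) ^ (m:ℤ) • ψ (E m)) * ((RatFunc.X : RatFunc F) ^ (-(m':ℤ)) • ψ (E m'))) = ψ (E m) := by
      intro m hm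
      rw [Finset.sum_eq_single_of_mem m hm]
      · rw [Matrix.smul_mul, Matrix.mul_smul, smul_smul, ← zpow_add₀ hXne,
          add_neg_cancel, zpow_zero, one_smul, ← _root_.map_mul, hidem m hm]
      · intro m' hm' hne
        rw [Matrix.smul_mul, Matrix.mul_smul, smul_smul, ← _root_.map_mul,
          horth m hm m' hm' (fun hc => hne hc.symm), map_zero, smul_zero]
    calc ∑ m ∈ s, ∑ m' ∈ s,
          ((RatFunc.X : RatFunc F) ^ (m:ℤ) • ψ (E m)) * ((RatFunc.X : RatFunc F) ^ (-(m':ℤ)) • ψ (E m'))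
        = ∑ m ∈ s, ψ (E m) := Finset.sum_congr rfl hterm
      _ = ψ (∑ m ∈ s, E m) := (map_sum ψ E s).symm
      _ = 1 := by rw [hsum, _root_.map_one]
  refine ⟨Y, Matrix.isUnit_det_of_right_inverse hYY', ?_⟩
  have hcoeY : ∀ l j, ((Y l j : RatFunc F) : LaurentSeries F)
      = ∑ m ∈ s, HahnSeries.single (m : ℤ) (E m l j) := by
    intro l j
    have h1 : Y l j = ∑ m ∈ s, ((RatFunc.X : RatFunc F) ^ (m:ℤ)) * algebraMap F (RatFunc F) (E m l j) := by
      rw [hY, Matrix.sum_apply]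
      refine Finset.sum_congr rfl fun m hm => ?_
      rw [Matrix.smul_apply, RingHom.mapMatrix_apply, Matrix.map_apply, smul_eq_mul]
    rw [h1, coe_sum]
    refine Finset.sum_congr rfl fun m hm => ?_
    rw [_root_.map_mul, coe_X_zpow, coe_algebraMap', HahnSeries.single_mul_single,
      add_zero, one_mul]
  ext i j
  rw [Matrix.map_apply]
  apply (algebraMap (RatFunc F) (LaurentSeries F)).injective
  rw [coe_delta δ hadd hmul hF ht (Y i j), hcoeY i j]
  have hL : euler (∑ m ∈ s, HahnSeries.single (m:ℤ) (E m i j))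
      = ∑ m ∈ s, HahnSeries.single (m:ℤ) (((m:ℤ):F) * E m i j) := by
    rw [show euler (∑ m ∈ s, HahnSeries.single (m:ℤ) (E m i j))
        = eulerHom (∑ m ∈ s, HahnSeries.single (m:ℤ) (E m i j)) from rfl, map_sum]
    exact Finset.sum_congr rfl fun m hm => euler_single _ _
  rw [hL]
  have hR : ((((P.map (algebraMap F (RatFunc F)))ᵀ * Y) i j : RatFunc F) : LaurentSeries F)
      = ∑ m ∈ s, HahnSeries.single (m:ℤ) (((m:ℤ):F) * E m i j) := by
    have h2 : ((P.map (algebraMap F (RatFunc F)))ᵀ * Y) i j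
        = ∑ l, algebraMap F (RatFunc F) (P l i) * Y l j := by
      rw [Matrix.mul_apply]
      refine Finset.sum_congr rfl fun l _ => ?_
      rw [Matrix.transpose_apply, Matrix.map_apply]
    rw [h2, coe_sum]
    have h3 : ∀ l, ((algebraMap F (RatFunc F) (P l i) * Y l j : RatFunc F) : LaurentSeries F)
        = ∑ m ∈ s, HahnSeries.single (m:ℤ) (P l i * E m l j) := by
      intro l
      rw [_root_.map_mul, coe_algebraMap', hcoeY l j, Finset.mul_sum]
      refine Finset.sum_congr rfl fun m hm => ?_
      rw [HahnSeries.single_mul_single, zero_add]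
    calc ∑ l, ((algebraMap F (RatFunc F) (P l i) * Y l j : RatFunc F) : LaurentSeries F)
        = ∑ l, ∑ m ∈ s, HahnSeries.single (m:ℤ) (P l i * E m l j) :=
          Finset.sum_congr rfl fun l _ => h3 l
      _ = ∑ m ∈ s, ∑ l, HahnSeries.single (m:ℤ) (P l i * E m l j) := Finset.sum_comm
      _ = ∑ m ∈ s, HahnSeries.single (m:ℤ) (((m:ℤ):F) * E m i j) := by
          refine Finset.sum_congr rfl fun m hm => ?_
          have h4 : ∑ l, P l i * E m l j = ((m:ℤ):F) * E m i j := by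
            have h5 : (Pᵀ * E m) i j = (((m:ℤ):F) • E m) i j := by rw [heig m hm]
            rw [Matrix.mul_apply] at h5
            simp only [Matrix.smul_apply, smul_eq_mul, Matrix.transpose_apply] at h5
            exact h5
          rw [single_sum, h4]
  rw [hR]

lemma coe_const_mul (a : F) (g : RatFunc F) :
    ((algebraMap F (RatFunc F) a * g : RatFunc F) : LaurentSeries F)
      = a • (g : LaurentSeries F) := by
  rw [_root_.map_mul, coe_algebraMap', ← HahnSeries.C_apply, HahnSeries.C_mul_eq_smul]

lemma coeff_sum_mul (u : Fin n → F) (Yc : Fin n → RatFunc F) (k : ℤ) :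
    ((∑ i, algebraMap F (RatFunc F) (u i) * Yc i : RatFunc F) : LaurentSeries F).coeff k
      = ∑ i, u i * ((Yc i : RatFunc F) : LaurentSeries F).coeff k := by
  rw [coe_sum]
  rw [show (∑ i, ((algebraMap F (RatFunc F) (u i) * Yc i : RatFunc F) : LaurentSeries F)).coeff k
      = coeffHom k (∑ i, ((algebraMap F (RatFunc F) (u i) * Yc i : RatFunc F) : LaurentSeries F))
      from rfl, map_sum]
  refine Finset.sum_congr rfl fun i _ => ?_
  rw [coeffHom_apply, coe_const_mul, HahnSeries.coeff_smul, smul_eq_mul]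

include hadd hmul hF ht in
lemma forward (P : Matrix (Fin n) (Fin n) F) (Y : Matrix (Fin n) (Fin n) (RatFunc F))
    (hdet : IsUnit Y.det)
    (hYeq : Y.map δ = (P.map (algebraMap F (RatFunc F)))ᵀ * Y) :
    ∃ s : Finset ℤ, aeval P (∏ m ∈ s, (X - C ((m : ℤ) : F))) = 0 := by
  classical
  set c : ℤ → Matrix (Fin n) (Fin n) F :=
    fun k => Matrix.of fun i j => ((Y i j : RatFunc F) : LaurentSeries F).coeff k with hc
  have heigc : ∀ k : ℤ, Pᵀ * c k = ((k : ℤ) : F) • c k := by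
    intro k
    ext i j
    have h1 : δ (Y i j) = ∑ l, algebraMap F (RatFunc F) (P l i) * Y l j := by
      have h0 := congrFun (congrFun hYeq i) j
      rw [Matrix.map_apply, Matrix.mul_apply] at h0
      rw [h0]
      exact Finset.sum_congr rfl fun l _ => by rw [Matrix.transpose_apply, Matrix.map_apply]
    have h2 := congrArg (fun z : RatFunc F => ((z : LaurentSeries F)).coeff k) h1
    rw [coe_delta δ hadd hmul hF ht, euler_coeff,
      coeff_sum_mul (fun l => P l i) (fun l => Y l j) k] at h2
    rw [Matrix.mul_apply, Matrix.smul_apply]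
    simp only [hc, Matrix.of_apply, Matrix.transpose_apply, smul_eq_mul]
    exact h2.symm
  have hroot : ∀ k : ℤ, c k ≠ 0 → (Pᵀ.charpoly).IsRoot ((k : ℤ) : F) := by
    intro k hk
    rw [Polynomial.IsRoot, eval_charpoly]
    by_contra hne
    have hU : IsUnit (((k:ℤ):F) • (1 : Matrix (Fin n) (Fin n) F) - Pᵀ).det :=
      isUnit_iff_ne_zero.mpr hne
    set M := ((k:ℤ):F) • (1 : Matrix (Fin n) (Fin n) F) - Pᵀ with hM
    have hMc : M * c k = 0 := by
      rw [hM, Matrix.sub_mul, Matrix.smul_mul, Matrix.one_mul, heigc k, sub_self]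
    have hc0 : c k = 0 := by
      calc c k = (M⁻¹ * M) * c k := by rw [Matrix.nonsing_inv_mul M hU, Matrix.one_mul]
        _ = M⁻¹ * (M * c k) := Matrix.mul_assoc _ _ _
        _ = 0 := by rw [hMc, Matrix.mul_zero]
    exact hk hc0
  have hfin : {k : ℤ | c k ≠ 0}.Finite := by
    apply Set.Finite.subset
      ((Polynomial.finite_setOf_isRoot (Pᵀ.charpoly_monic.ne_zero)).preimage
        (Set.injOn_of_injective Int.cast_injective))
    intro k hk
    exact hroot k hk
  refine ⟨hfin.toFinset, ?_⟩
  set q : Polynomial F := ∏ m ∈ hfin.toFinset, (X - C ((m:ℤ):F)) with hqdef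
  have hAq : aeval Pᵀ q = 0 := by
    set N := aeval Pᵀ q with hN
    have hNc : ∀ k : ℤ, N * c k = 0 := by
      intro k
      by_cases hks : k ∈ hfin.toFinset
      · have hsplit : q = (∏ m ∈ hfin.toFinset.erase k, (X - C ((m:ℤ):F)))
            * (X - C ((k:ℤ):F)) := (Finset.prod_erase_mul _ _ hks).symm
        have hfac : aeval Pᵀ (X - C ((k:ℤ):F)) * c k = 0 := by
          rw [map_sub, aeval_X, aeval_C, Algebra.algebraMap_eq_smul_one, Matrix.sub_mul,
            Matrix.smul_mul, Matrix.one_mul, heigc k, sub_self]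
        rw [hN, hsplit, _root_.map_mul, Matrix.mul_assoc, hfac, Matrix.mul_zero]
      · have hck : c k = 0 := by
          by_contra hc0
          exact hks (hfin.mem_toFinset.mpr hc0)
        rw [hck, Matrix.mul_zero]
    have hrow : ∀ r, (fun i => algebraMap F (RatFunc F) (N r i)) ᵥ* Y = 0 := by
      intro r
      funext j
      have hv1 : ((fun i => algebraMap F (RatFunc F) (N r i)) ᵥ* Y) j
          = ∑ i, algebraMap F (RatFunc F) (N r i) * Y i j := by
        simp [Matrix.vecMul, dotProduct]
      rw [hv1, Pi.zero_apply]
      apply (algebraMap (RatFunc F) (LaurentSeries F)).injective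
      rw [_root_.map_zero]
      ext k
      rw [coeff_sum_mul (fun i => N r i) (fun i => Y i j) k, HahnSeries.coeff_zero]
      calc ∑ i, N r i * ((Y i j : RatFunc F) : LaurentSeries F).coeff k
          = (N * c k) r j := by rw [Matrix.mul_apply]; rfl
        _ = 0 := by rw [hNc k, Matrix.zero_apply]
    have hu : ∀ r i, N r i = 0 := by
      intro r i
      have h2 : (fun i => algebraMap F (RatFunc F) (N r i)) ᵥ* (Y * Y⁻¹) = 0 := by
        rw [← Matrix.vecMul_vecMul, hrow r, Matrix.zero_vecMul]
      rw [Matrix.mul_nonsing_inv Y hdet, Matrix.vecMul_one] at h2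
      have h3 := congrFun h2 i
      rw [Pi.zero_apply] at h3
      exact (algebraMap F (RatFunc F)).injective (by rw [h3, map_zero])
    ext r i
    rw [Matrix.zero_apply]
    exact hu r i
  rw [aeval_transpose P q] at hAq
  exact Matrix.transpose_eq_zero.mp hAq

end construct

section closure

variable [CharZero F]

lemma diag_of (P : Matrix (Fin n) (Fin n) F) (s : Finset ℤ) (hsne : s.Nonempty)
    (hq : aeval P (∏ m ∈ s, (X - C ((m : ℤ) : F))) = 0) :
    (∃ R D : Matrix (Fin n) (Fin n) (AlgebraicClosure F),
        IsUnit R.det ∧ D.IsDiag ∧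
          P.map (algebraMap F (AlgebraicClosure F)) = R⁻¹ * D * R) ∧
      ∀ μ ∈ spectrum (AlgebraicClosure F) (P.map (algebraMap F (AlgebraicClosure F))),
        ∃ k : ℤ, μ = (k : AlgebraicClosure F) := by
  classical
  obtain ⟨E, hsum, heig, -, -⟩ := lagrange_system P s hsne hq
  set Ve : Set (Fin n → F) := {x | ∃ kk : ℤ, P.mulVec x = ((kk : ℤ) : F) • x} with hVe
  have hspan : Submodule.span F Ve = ⊤ := by
    rw [Submodule.eq_top_iff']
    intro x
    have hx : x = ∑ m ∈ s, (E m).mulVec x := by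
      have h1 : (∑ m ∈ s, E m).mulVec x = ∑ m ∈ s, (E m).mulVec x :=
        map_sum (AddMonoidHom.mk' (fun M : Matrix (Fin n) (Fin n) F => M.mulVec x)
          (fun A B => Matrix.add_mulVec A B x)) E s
      rw [hsum] at h1
      rw [← h1, Matrix.one_mulVec]
    rw [hx]
    refine Submodule.sum_mem _ fun m hm => Submodule.subset_span ⟨m, ?_⟩
    rw [Matrix.mulVec_mulVec, heig m hm, Matrix.smul_mulVec]
  obtain ⟨b, hbVe, hbsp, hbli⟩ := exists_linearIndependent F Ve
  rw [hspan] at hbsp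
  let bas : Module.Basis b F (Fin n → F) := Module.Basis.mk hbli (by rw [Subtype.range_coe, hbsp])
  let e : b ≃ Fin n := bas.indexEquiv (Pi.basisFun F (Fin n))
  let bas' : Module.Basis (Fin n) F (Fin n → F) := bas.reindex e
  have hbas' : ∀ i, (bas' i) ∈ Ve := by
    intro i
    rw [show bas' i = bas (e.symm i) from bas.reindex_apply e i, Module.Basis.mk_apply]
    exact hbVe (e.symm i).2
  choose kk hkk using fun i => hbas' i
  set S : Matrix (Fin n) (Fin n) F := (Pi.basisFun F (Fin n)).toMatrix ⇑bas' with hS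
  have hSinv : Invertible S := (Pi.basisFun F (Fin n)).invertibleToMatrix bas'
  have hSdet : IsUnit S.det := Matrix.isUnit_det_of_invertible S
  have hSa : ∀ i j, S i j = bas' j i := by
    intro i j
    rw [hS, Module.Basis.toMatrix_apply, Pi.basisFun_repr]
  have hPS : P * S = S * Matrix.diagonal (fun i => ((kk i : ℤ) : F)) := by
    ext i j
    rw [Matrix.mul_apply, Matrix.mul_diagonal]
    have h5 : P.mulVec (bas' j) i = (((kk j : ℤ) : F) • (bas' j : Fin n → F)) i := by
      rw [hkk j]
    simp only [Matrix.mulVec, dotProduct, Pi.smul_apply, smul_eq_mul] at h5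
    calc ∑ l, P i l * S l j = ∑ l, P i l * bas' j l :=
          Finset.sum_congr rfl fun l _ => by rw [hSa l j]
      _ = ((kk j : ℤ) : F) * bas' j i := h5
      _ = S i j * ((kk j : ℤ) : F) := by rw [hSa i j, mul_comm]
  have hP : P = S * Matrix.diagonal (fun i => ((kk i : ℤ) : F)) * S⁻¹ := by
    rw [← hPS, Matrix.mul_assoc, Matrix.mul_nonsing_inv S hSdet, Matrix.mul_one]
  set φ := algebraMap F (AlgebraicClosure F) with hφ
  set Sφ := S.map φ with hSφ
  set Sφi := (S⁻¹).map φ with hSφi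
  have hSS : Sφ * Sφi = 1 := by
    rw [hSφ, hSφi, ← Matrix.map_mul, Matrix.mul_nonsing_inv S hSdet,
      Matrix.map_one φ φ.map_zero φ.map_one]
  have hSS' : Sφi * Sφ = 1 := by
    rw [hSφ, hSφi, ← Matrix.map_mul, Matrix.nonsing_inv_mul S hSdet,
      Matrix.map_one φ φ.map_zero φ.map_one]
  have hRinv : Sφi⁻¹ = Sφ := Matrix.inv_eq_left_inv hSS
  have hPφ : P.map φ = Sφ * Matrix.diagonal (fun i => ((kk i : ℤ) : AlgebraicClosure F)) * Sφi := by
    rw [hP, Matrix.map_mul, Matrix.map_mul]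
    have hdm : (Matrix.diagonal fun i => ((kk i : ℤ) : F)).map ⇑φ
        = Matrix.diagonal (fun i => ((kk i : ℤ) : AlgebraicClosure F)) := by
      ext a c
      rcases eq_or_ne a c with hac | hac
      · subst hac
        rw [Matrix.map_apply, Matrix.diagonal_apply_eq, Matrix.diagonal_apply_eq]
        exact map_intCast φ (kk a)
      · rw [Matrix.map_apply, Matrix.diagonal_apply_ne _ hac,
          Matrix.diagonal_apply_ne _ hac, map_zero]
    rw [hdm]
  constructor
  · refine ⟨Sφi, Matrix.diagonal (fun i => ((kk i : ℤ) : AlgebraicClosure F)),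
      ?_, Matrix.isDiag_diagonal _, ?_⟩
    · have h8 : Sφi.det = φ (S⁻¹.det) := by
        rw [hSφi, ← RingHom.mapMatrix_apply, ← RingHom.map_det]
      rw [h8]
      exact (Matrix.isUnit_nonsing_inv_det S hSdet).map φ
    · rw [hRinv, hPφ]
  · intro μ hμ
    rw [spectrum.mem_iff] at hμ
    have key : algebraMap (AlgebraicClosure F)
          (Matrix (Fin n) (Fin n) (AlgebraicClosure F)) μ - P.map φ
        = Sφ * Matrix.diagonal (fun i => μ - ((kk i : ℤ) : AlgebraicClosure F)) * Sφi := by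
      have halg : algebraMap (AlgebraicClosure F)
          (Matrix (Fin n) (Fin n) (AlgebraicClosure F)) μ
          = μ • (1 : Matrix (Fin n) (Fin n) (AlgebraicClosure F)) :=
        Algebra.algebraMap_eq_smul_one μ
      have hdiagsub : Matrix.diagonal (fun i => μ - ((kk i : ℤ) : AlgebraicClosure F))
          = μ • (1 : Matrix (Fin n) (Fin n) (AlgebraicClosure F))
            - Matrix.diagonal (fun i => ((kk i : ℤ) : AlgebraicClosure F)) := by
        rw [Matrix.smul_one_eq_diagonal, ← Matrix.diagonal_sub]
      rw [halg, hPφ, hdiagsub, Matrix.mul_sub, Matrix.sub_mul]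
      congr 1
      rw [Matrix.mul_smul, Matrix.mul_one, Matrix.smul_mul, hSS]
    have hdetz : (algebraMap (AlgebraicClosure F)
        (Matrix (Fin n) (Fin n) (AlgebraicClosure F)) μ - P.map φ).det = 0 := by
      by_contra h
      exact hμ ((Matrix.isUnit_iff_isUnit_det _).mpr (isUnit_iff_ne_zero.mpr h))
    rw [key, Matrix.det_mul, Matrix.det_mul] at hdetz
    have hdd : (Matrix.diagonal (fun i => μ - ((kk i : ℤ) : AlgebraicClosure F))).det = 0 := by
      have hss : Sφ.det * Sφi.det = 1 := by rw [← Matrix.det_mul, hSS, Matrix.det_one]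
      have := hdetz
      by_contra hdd
      apply hdd
      calc (Matrix.diagonal (fun i => μ - ((kk i : ℤ) : AlgebraicClosure F))).det
          = (Sφ.det * Sφi.det) *
            (Matrix.diagonal (fun i => μ - ((kk i : ℤ) : AlgebraicClosure F))).det := by
            rw [hss, one_mul]
        _ = Sφ.det * (Matrix.diagonal (fun i => μ - ((kk i : ℤ) : AlgebraicClosure F))).det
            * Sφi.det := by ring
        _ = 0 := this
    rw [Matrix.det_diagonal] at hdd
    obtain ⟨i, -, hi⟩ := Finset.prod_eq_zero_iff.mp hdd
    exact ⟨kk i, (sub_eq_zero.mp hi)⟩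

lemma star_of_diag (P : Matrix (Fin n) (Fin n) F)
    (h : (∃ R D : Matrix (Fin n) (Fin n) (AlgebraicClosure F),
        IsUnit R.det ∧ D.IsDiag ∧
          P.map (algebraMap F (AlgebraicClosure F)) = R⁻¹ * D * R) ∧
      ∀ μ ∈ spectrum (AlgebraicClosure F) (P.map (algebraMap F (AlgebraicClosure F))),
        ∃ k : ℤ, μ = (k : AlgebraicClosure F)) :
    ∃ s : Finset ℤ, aeval P (∏ m ∈ s, (X - C ((m : ℤ) : F))) = 0 := by
  classical
  obtain ⟨⟨R, D, hR, hD, hPRD⟩, hspec⟩ := h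
  set φ := algebraMap F (AlgebraicClosure F) with hφ
  have hRR : R⁻¹ * R = 1 := Matrix.nonsing_inv_mul R hR
  have hRR' : R * R⁻¹ = 1 := Matrix.mul_nonsing_inv R hR
  set d : Fin n → AlgebraicClosure F := fun i => D i i with hd
  have hDd : D = Matrix.diagonal d := hD.diagonal_diag.symm
  have hmem : ∀ i, d i ∈ spectrum (AlgebraicClosure F) (P.map φ) := by
    intro i
    rw [spectrum.mem_iff]
    intro hU
    have key : algebraMap (AlgebraicClosure F)
          (Matrix (Fin n) (Fin n) (AlgebraicClosure F)) (d i) - P.map φ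
        = R⁻¹ * Matrix.diagonal (fun j => d i - d j) * R := by
      have halg : algebraMap (AlgebraicClosure F)
          (Matrix (Fin n) (Fin n) (AlgebraicClosure F)) (d i)
          = d i • (1 : Matrix (Fin n) (Fin n) (AlgebraicClosure F)) :=
        Algebra.algebraMap_eq_smul_one (d i)
      have hdiagsub : Matrix.diagonal (fun j => d i - d j)
          = d i • (1 : Matrix (Fin n) (Fin n) (AlgebraicClosure F)) - Matrix.diagonal d := by
        rw [Matrix.smul_one_eq_diagonal, ← Matrix.diagonal_sub]
      rw [halg, hPRD, hDd, hdiagsub, Matrix.mul_sub, Matrix.sub_mul]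
      congr 1
      rw [Matrix.mul_smul, Matrix.mul_one, Matrix.smul_mul, hRR]
    have hdet1 : (algebraMap (AlgebraicClosure F)
        (Matrix (Fin n) (Fin n) (AlgebraicClosure F)) (d i) - P.map φ).det ≠ 0 :=
      isUnit_iff_ne_zero.mp ((Matrix.isUnit_iff_isUnit_det _).mp hU)
    apply hdet1
    rw [key, Matrix.det_mul, Matrix.det_mul]
    have hz : (Matrix.diagonal (fun j => d i - d j)).det = 0 := by
      rw [Matrix.det_diagonal]
      exact Finset.prod_eq_zero (Finset.mem_univ i) (sub_self _)
    rw [hz, mul_zero, zero_mul]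
  choose kk hkk using fun i => hspec (d i) (hmem i)
  refine ⟨Finset.image kk Finset.univ, ?_⟩
  set q : Polynomial F := ∏ m ∈ Finset.image kk Finset.univ, (X - C ((m : ℤ) : F)) with hqdef
  have hinj : Function.Injective
      (fun M : Matrix (Fin n) (Fin n) F => M.map φ) :=
    Matrix.map_injective φ.injective
  apply hinj
  show (aeval P q).map φ = (0 : Matrix (Fin n) (Fin n) F).map φ
  rw [Matrix.map_zero φ φ.map_zero]
  set ψa : Matrix (Fin n) (Fin n) F →ₐ[F] Matrix (Fin n) (Fin n) (AlgebraicClosure F) :=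
    (Algebra.ofId F (AlgebraicClosure F)).mapMatrix with hψa
  have h1 : (aeval P q).map φ = aeval (P.map φ) q := by
    have h2 : ψa P = P.map φ := rfl
    rw [← h2]
    exact (aeval_algHom_apply ψa P q).symm
  rw [h1]
  set χ : Matrix (Fin n) (Fin n) (AlgebraicClosure F)
      →ₐ[F] Matrix (Fin n) (Fin n) (AlgebraicClosure F) :=
    { toFun := fun M => R⁻¹ * M * R
      map_one' := by
        show R⁻¹ * 1 * R = 1
        rw [Matrix.mul_one, hRR]
      map_mul' := fun M N => by
        show R⁻¹ * (M * N) * R = (R⁻¹ * M * R) * (R⁻¹ * N * R)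
        simp only [Matrix.mul_assoc]
        congr 1
        rw [← Matrix.mul_assoc R R⁻¹ (N * R), hRR', Matrix.one_mul]
      map_zero' := by
        show R⁻¹ * 0 * R = 0
        rw [Matrix.mul_zero, Matrix.zero_mul]
      map_add' := fun M N => by
        show R⁻¹ * (M + N) * R = R⁻¹ * M * R + R⁻¹ * N * R
        rw [Matrix.mul_add, Matrix.add_mul]
      commutes' := fun r => by
        show R⁻¹ * (algebraMap F (Matrix (Fin n) (Fin n) (AlgebraicClosure F)) r) * R
          = algebraMap F (Matrix (Fin n) (Fin n) (AlgebraicClosure F)) r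
        have hcen : algebraMap F (Matrix (Fin n) (Fin n) (AlgebraicClosure F)) r
            = φ r • (1 : Matrix (Fin n) (Fin n) (AlgebraicClosure F)) := by
          rw [Matrix.algebraMap_eq_diagonal, Matrix.smul_one_eq_diagonal]
          rfl
        rw [hcen, Matrix.mul_smul, Matrix.mul_one, Matrix.smul_mul, hRR] } with hχ
  have h3 : P.map φ = χ D := hPRD
  rw [h3, aeval_algHom_apply χ D q]
  set dg : (Fin n → AlgebraicClosure F) →ₐ[F] Matrix (Fin n) (Fin n) (AlgebraicClosure F) :=
    { toFun := Matrix.diagonal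
      map_one' := Matrix.diagonal_one
      map_mul' := fun f g => (Matrix.diagonal_mul_diagonal f g).symm
      map_zero' := Matrix.diagonal_zero
      map_add' := fun f g => (Matrix.diagonal_add f g).symm
      commutes' := fun r => by rw [Matrix.algebraMap_eq_diagonal] } with hdg
  have h4 : aeval D q = dg (aeval d q) := by
    rw [hDd]
    exact aeval_algHom_apply dg d q
  have h5 : aeval d q = 0 := by
    funext i
    have h6 : (aeval d q) i = aeval (d i) q :=
      (aeval_algHom_apply (Pi.evalAlgHom F (fun _ : Fin n => AlgebraicClosure F) i) d q).symm
    rw [Pi.zero_apply, h6, hqdef, map_prod]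
    apply Finset.prod_eq_zero (Finset.mem_image_of_mem kk (Finset.mem_univ i))
    rw [map_sub, aeval_X, aeval_C]
    have h7 : algebraMap F (AlgebraicClosure F) ((kk i : ℤ) : F)
        = ((kk i : ℤ) : AlgebraicClosure F) := map_intCast φ (kk i)
    rw [h7, ← hkk i, sub_self]
  rw [h4, h5, map_zero, map_zero]

lemma star_insert (P : Matrix (Fin n) (Fin n) F) (s : Finset ℤ)
    (hq : aeval P (∏ m ∈ s, (X - C ((m : ℤ) : F))) = 0) :
    aeval P (∏ m ∈ insert (0 : ℤ) s, (X - C ((m : ℤ) : F))) = 0 := by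
  classical
  by_cases h : (0 : ℤ) ∈ s
  · rwa [Finset.insert_eq_self.mpr h]
  · rw [Finset.prod_insert h, _root_.map_mul, hq, mul_zero]

end closure

end

end Stmt17


open Matrix in
/-- Let `K = F(t)` with `δ|_F = 0`, `δ(t) = t`, and `P ∈ Mₙ(F)` traceless. Then
`(Mₙ(K), D_P)` is split over `(K, δ)` itself — i.e. `δᶜ(Y) = Pᵀ Y` has an invertible solution
over `K` — iff `P` is diagonalizable over the algebraic closure of `F` and all eigenvalues of
`P` are integers. -/
theorem stmt17 {F : Type*} [Field F] [CharZero F] {n : ℕ}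
    (δ : RatFunc F → RatFunc F)
    (hadd : ∀ x y : RatFunc F, δ (x + y) = δ x + δ y)
    (hmul : ∀ x y : RatFunc F, δ (x * y) = δ x * y + x * δ y)
    (hF : ∀ a : F, δ (algebraMap F (RatFunc F) a) = 0)
    (ht : δ RatFunc.X = RatFunc.X)
    (P : Matrix (Fin n) (Fin n) F) (htr : P.trace = 0) :
    (∃ Y : Matrix (Fin n) (Fin n) (RatFunc F), IsUnit Y.det ∧
        Y.map δ = (P.map (algebraMap F (RatFunc F)))ᵀ * Y) ↔
      ((∃ R D : Matrix (Fin n) (Fin n) (AlgebraicClosure F),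
          IsUnit R.det ∧ D.IsDiag ∧
            P.map (algebraMap F (AlgebraicClosure F)) = R⁻¹ * D * R) ∧
        ∀ μ ∈ spectrum (AlgebraicClosure F) (P.map (algebraMap F (AlgebraicClosure F))),
          ∃ k : ℤ, μ = (k : AlgebraicClosure F)) := by
  classical
  rcases Nat.eq_zero_or_pos n with hn | hn
  · subst hn
    constructor
    · intro _
      refine ⟨⟨1, 1, ?_, ?_, ?_⟩, ?_⟩
      · rw [Matrix.det_one]; exact isUnit_one
      · intro i j h; exact Fin.elim0 i
      · exact Matrix.ext fun i _ => Fin.elim0 i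
      · intro μ hμ
        exfalso
        rw [spectrum.mem_iff] at hμ
        exact hμ ⟨⟨_, 1, Matrix.ext fun i _ => Fin.elim0 i, Matrix.ext fun i _ => Fin.elim0 i⟩, rfl⟩
    · intro _
      refine ⟨1, by rw [Matrix.det_one]; exact isUnit_one, Matrix.ext fun i _ => Fin.elim0 i⟩
  · constructor
    · rintro ⟨Y, hdet, hYeq⟩
      obtain ⟨s, hq⟩ := Stmt17.forward δ hadd hmul hF ht P Y hdet hYeq
      exact Stmt17.diag_of P (insert 0 s) (Finset.insert_nonempty _ _)
        (Stmt17.star_insert P s hq)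
    · intro hRHS
      obtain ⟨s, hq⟩ := Stmt17.star_of_diag P hRHS
      exact Stmt17.construct δ hadd hmul hF ht P (insert 0 s) (Finset.insert_nonempty _ _)
        (Stmt17.star_insert P s hq)
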